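/- Let C ⊆ 𝔽₂^m be an s-dimensional linear code, and let Φ be the m×(2^s−1) matrix whose columns are (1/√m)·BPSK(c) for the nonzero codewords c ∈ C. Let r < s, set K = 2^r, and suppose Φ satisfies the binary restricted isometry upper bound of order K with constant δ: for every index set I of size K, ‖Φ_I·1‖₂² ≤ (1+δ)·K, where 1 is the all-ones vector of length K. Then every r-dimensional linear subcode V ⊆ C has support of size d ≥ m·(1 − (1+δ)/K). In particular, if δ < √2 − 1, then d > m·(1 − √2/K); equivalently, the r-th generalized Hamming weight satisfies d_r(C) > m·(1 − √2/K). -/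

import Mathlib

/-- The BPSK map: sends a binary word `c ∈ 𝔽₂^m` to the real vector whose `j`-th entry is
`+1` if `c j = 0` and `-1` if `c j = 1`. -/
noncomputable def bpsk {m : ℕ} (c : Fin m → ZMod 2) : Fin m → ℝ :=
  fun j => if c j = 0 then 1 else -1

/-- The support of a subspace `V ⊆ 𝔽₂^m`: the set of coordinates at which some element of
`V` has a `1`. -/
def suppSet {m : ℕ} (V : Submodule (ZMod 2) (Fin m → ZMod 2)) : Set (Fin m) :=
  {j | ∃ v ∈ V, v j = 1}

/-- Let `C ⊆ 𝔽₂^m` be an `s`-dimensional linear code, `r < s`, `K = 2^r`, and let `Φ` be the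
matrix whose columns are the normalized BPSK images `(1/√m)·BPSK(c)` of the nonzero
codewords of `C`. If `Φ` satisfies the binary restricted isometry upper bound of order `K`
with constant `δ` (i.e. for every set `T` of `K` distinct nonzero codewords,
`‖Σ_{w∈T} (1/√m)·BPSK(w)‖₂² ≤ (1+δ)·K`), then every `r`-dimensional subcode `V ⊆ C` has
support of size `d ≥ m·(1 − (1+δ)/K)`; in particular if `δ < √2 − 1` then
`d > m·(1 − √2/K)`, i.e. the `r`-th generalized Hamming weight satisfies
`d_r(C) > m·(1 − √2/K)`. -/

lemma zmod2_cases (x : ZMod 2) : x = 0 ∨ x = 1 := by fin_cases x <;> [exact Or.inl rfl; exact Or.inr rfl]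

lemma bpsk_add {m : ℕ} (a b : Fin m → ZMod 2) (j : Fin m) :
    bpsk (a + b) j = bpsk a j * bpsk b j := by
  unfold bpsk
  have h11 : (1 + 1 : ZMod 2) = 0 := by decide
  rcases zmod2_cases (a j) with h1 | h1 <;> rcases zmod2_cases (b j) with h2 | h2 <;>
    simp [h1, h2, h11]

lemma bpsk_sq {m : ℕ} (a : Fin m → ZMod 2) (j : Fin m) : bpsk a j ^ 2 = 1 := by
  unfold bpsk; rcases zmod2_cases (a j) with h | h <;> simp [h]

theorem support_weight_lower_of_binary_rip
    (m s r K : ℕ) (C : Submodule (ZMod 2) (Fin m → ZMod 2))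
    (hs : Module.finrank (ZMod 2) C = s) (hr : r < s) (hK : K = 2 ^ r)
    (δ : ℝ)
    (hRIP : ∀ T : Finset (Fin m → ZMod 2), (∀ w ∈ T, w ∈ C ∧ w ≠ 0) → T.card = K →
      ∑ j : Fin m, (∑ w ∈ T, (1 / Real.sqrt m) * bpsk w j) ^ 2 ≤ (1 + δ) * (K : ℝ)) :
    ∀ V : Submodule (ZMod 2) (Fin m → ZMod 2), V ≤ C →
      Module.finrank (ZMod 2) V = r →
        ((m : ℝ) * (1 - (1 + δ) / (K : ℝ)) ≤ ((suppSet V).ncard : ℝ)) ∧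
        (δ < Real.sqrt 2 - 1 →
          (m : ℝ) * (1 - Real.sqrt 2 / (K : ℝ)) < ((suppSet V).ncard : ℝ)) := by
  intro V hVC hV
  classical
  -- m is positive
  have hmpos : 0 < m := by
    have h1 : Module.finrank (ZMod 2) C ≤ Module.finrank (ZMod 2) (Fin m → ZMod 2) :=
      Submodule.finrank_le C
    rw [hs, Module.finrank_pi] at h1
    simp only [Fintype.card_fin] at h1
    omega
  have hK0 : 0 < K := by rw [hK]; positivity
  have hmR : (0 : ℝ) < m := by exact_mod_cast hmpos
  have hKR : (0 : ℝ) < K := by exact_mod_cast hK0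
  -- pick v₀ ∈ C \ V
  have hne : V ≠ C := by
    intro h; rw [h, hs] at hV; omega
  obtain ⟨v₀, hv₀C, hv₀V⟩ := SetLike.exists_of_lt (lt_of_le_of_ne hVC hne)
  -- the finset of elements of V
  have hVfin : (V : Set (Fin m → ZMod 2)).Finite := Set.toFinite _
  set VF : Finset (Fin m → ZMod 2) := hVfin.toFinset with hVFdef
  have hmemVF : ∀ v, v ∈ VF ↔ v ∈ V := by
    intro v; rw [hVFdef, Set.Finite.mem_toFinset]; exact SetLike.mem_coe
  have hVFcard : VF.card = K := by
    have h1 : Fintype.card V = 2 ^ r := by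
      rw [Module.card_eq_pow_finrank (K := ZMod 2) (V := V), ZMod.card, hV]
    have h2 : VF.card = Nat.card V := by
      rw [hVFdef, ← Set.ncard_eq_toFinset_card _ hVfin, ← Nat.card_coe_set_eq]
      exact (Nat.card_congr (Equiv.refl _)).symm
    rw [h2, Nat.card_eq_fintype_card, h1, hK]
  set T : Finset (Fin m → ZMod 2) := VF.image (fun v => v₀ + v) with hTdef
  have hinj : Function.Injective (fun v : Fin m → ZMod 2 => v₀ + v) :=
    fun a b h => by simpa using h
  have hTcard : T.card = K := by
    rw [hTdef, Finset.card_image_of_injective _ hinj, hVFcard]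
  have hTmem : ∀ w ∈ T, w ∈ C ∧ w ≠ 0 := by
    intro w hw
    rw [hTdef, Finset.mem_image] at hw
    obtain ⟨v, hv, rfl⟩ := hw
    have hvV : v ∈ V := (hmemVF v).1 hv
    refine ⟨C.add_mem hv₀C (hVC hvV), ?_⟩
    intro h0
    have : v₀ = -v := eq_neg_of_add_eq_zero_left h0
    exact hv₀V (this ▸ V.neg_mem hvV)
  -- column sums
  set S : Fin m → ℝ := fun j => ∑ v ∈ VF, bpsk v j with hSdef
  have hsumT : ∀ j, (∑ w ∈ T, (1 / Real.sqrt m) * bpsk w j)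
      = (1 / Real.sqrt m) * (bpsk v₀ j * S j) := by
    intro j
    rw [hTdef, Finset.sum_image (fun a _ b _ h => hinj h)]
    simp only [hSdef, bpsk_add, Finset.mul_sum]
  -- S j = 0 on the support
  have hS0 : ∀ j ∈ suppSet V, S j = 0 := by
    intro j hj
    obtain ⟨v₁, hv₁V, hv₁j⟩ := hj
    have himg : VF.image (fun v => v₁ + v) = VF := by
      apply Finset.ext
      intro w
      simp only [Finset.mem_image, hmemVF]
      constructor
      · rintro ⟨v, hv, rfl⟩; exact V.add_mem hv₁V hv
      · intro hw
        exact ⟨w - v₁, V.sub_mem hw hv₁V, by abel⟩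
    have hstep : ∑ v ∈ VF, bpsk (v₁ + v) j = S j := by
      calc ∑ v ∈ VF, bpsk (v₁ + v) j
          = ∑ w ∈ VF.image (fun v => v₁ + v), bpsk w j :=
            (Finset.sum_image (f := fun w => bpsk w j) (g := fun v => v₁ + v)
              (fun a _ b _ h => by simpa using h)).symm
        _ = S j := by rw [himg]
    have hneg : bpsk v₁ j = -1 := by
      unfold bpsk; rw [hv₁j]; norm_num
    have hflip : S j = -S j := by
      calc S j = ∑ v ∈ VF, bpsk (v₁ + v) j := hstep.symm
        _ = ∑ v ∈ VF, -(bpsk v j) := by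
            refine Finset.sum_congr rfl fun v _ => ?_
            rw [bpsk_add, hneg]; ring
        _ = -S j := by rw [Finset.sum_neg_distrib]
    linarith
  -- S j = K off the support
  have hSK : ∀ j ∉ suppSet V, S j = K := by
    intro j hj
    have : ∀ v ∈ VF, bpsk v j = 1 := by
      intro v hv
      have hvV := (hmemVF v).1 hv
      rcases zmod2_cases (v j) with h | h
      · unfold bpsk; rw [h]; simp
      · exact absurd ⟨v, hvV, h⟩ hj
    simp only [hSdef]
    rw [Finset.sum_congr rfl this, Finset.sum_const, hVFcard]
    simp
  -- support as a finset
  have hsuppfin : (suppSet V).Finite := Set.toFinite _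
  set D : Finset (Fin m) := hsuppfin.toFinset with hDdef
  have hmemD : ∀ j, j ∈ D ↔ j ∈ suppSet V := by
    intro j; rw [hDdef, Set.Finite.mem_toFinset]
  have hncard : (suppSet V).ncard = D.card := Set.ncard_eq_toFinset_card _ hsuppfin
  have hDle : D.card ≤ m := by
    have := Finset.card_le_card (Finset.subset_univ D)
    simpa using this
  -- evaluate the total sum
  have htotal : ∑ j : Fin m, (∑ w ∈ T, (1 / Real.sqrt m) * bpsk w j) ^ 2
      = ((m : ℝ) - D.card) * (K : ℝ) ^ 2 / m := by
    have hpt : ∀ j : Fin m, (∑ w ∈ T, (1 / Real.sqrt m) * bpsk w j) ^ 2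
        = if j ∈ D then 0 else (K : ℝ) ^ 2 / m := by
      intro j
      rw [hsumT j, mul_pow, mul_pow, bpsk_sq]
      have hsqrt : (1 / Real.sqrt m) ^ 2 = 1 / m := by
        rw [div_pow, Real.sq_sqrt (le_of_lt hmR), one_pow]
      by_cases hj : j ∈ D
      · rw [if_pos hj, hS0 j ((hmemD j).1 hj)]; ring
      · rw [if_neg hj, hSK j (fun h => hj ((hmemD j).2 h)), hsqrt]; ring
    rw [Finset.sum_congr rfl (fun j _ => hpt j), Finset.sum_ite, Finset.sum_const,
      Finset.sum_const]
    have hcardc : (Finset.univ.filter (fun j => j ∉ D)).card = m - D.card := by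
      rw [Finset.filter_not, Finset.filter_mem_eq_inter, Finset.univ_inter]
      simp [Finset.card_sdiff_of_subset (Finset.subset_univ D)]
    rw [hcardc]
    simp only [smul_zero, zero_add, nsmul_eq_mul]
    rw [Nat.cast_sub hDle]
    ring
  -- apply the RIP hypothesis
  have hineq := hRIP T hTmem hTcard
  rw [htotal] at hineq
  have hd := hncard
  have key : ((m : ℝ) - D.card) * K ≤ (1 + δ) * m := by
    rw [div_le_iff₀ hmR] at hineq
    nlinarith [hKR]
  have goal1 : (m : ℝ) * (1 - (1 + δ) / K) ≤ ((suppSet V).ncard : ℝ) := by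
    rw [hd]
    have h2 : (m : ℝ) - D.card ≤ (1 + δ) * m / K := (le_div_iff₀ hKR).mpr key
    have h3 : (m : ℝ) * (1 - (1 + δ) / K) = m - (1 + δ) * m / K := by ring
    linarith
  refine ⟨goal1, fun hδ => ?_⟩
  have h4 : (1 : ℝ) + δ < Real.sqrt 2 := by linarith
  have h5 : (m : ℝ) * (1 - Real.sqrt 2 / K) < (m : ℝ) * (1 - (1 + δ) / K) := by
    apply mul_lt_mul_of_pos_left _ hmR
    have : (1 + δ) / (K : ℝ) < Real.sqrt 2 / K := by
      apply div_lt_div_of_pos_right h4 hKR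
    linarith
  linarith
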